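/- arXiv:2003.03664 — 3 statements merged into one kernel-verified Lean document; each statement's English description precedes it below -/
import Mathlib

section
/- Let μ be a permuton and i, j ∈ ℕ. Then ∫_{[0,1]²} x^i y^j dμ(x,y) can be written as a finite nonnegative linear combination of permutation densities: there exist a set S_{i,j} of permutations of order i+j+1 and positive constants C_τ such that ∫ x^i y^j dμ = ∑_{τ∈S_{i,j}} C_τ t(τ,μ). Consequently, if two permutons μ, ν satisfy t(τ,μ) = t(τ,ν) for all finite permutations τ, then μ = ν. -/
open MeasureTheory

/-- A permuton: a Borel measure on `ℝ²` supported on `[0,1]²` with uniform marginals. -/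
def IsPermuton (μ : Measure (ℝ × ℝ)) : Prop :=
  μ.map Prod.fst = volume.restrict (Set.Icc (0:ℝ) 1) ∧
  μ.map Prod.snd = volume.restrict (Set.Icc (0:ℝ) 1)

/-- The density `t(τ,μ)` of a pattern `τ ∈ 𝔖_k` in a permuton `μ`. -/
noncomputable def permDensity {k : ℕ} (τ : Equiv.Perm (Fin k)) (μ : Measure (ℝ × ℝ)) : ℝ :=
  (Nat.factorial k : ℝ) *
    ((Measure.pi fun _ : Fin k => μ)
      {x | (∀ i j : Fin k, i < j → (x i).1 < (x j).1) ∧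
           (∀ i j : Fin k, i < j → (x (τ⁻¹ i)).2 < (x (τ⁻¹ j)).2)}).toReal

/-- The rectangle (cut) distance between permutons. -/
noncomputable def permCutDist (μ ν : Measure (ℝ × ℝ)) : ℝ :=
  sSup {y | ∃ a b c d : ℝ, a ∈ Set.Icc (0:ℝ) 1 ∧ b ∈ Set.Icc (0:ℝ) 1 ∧
    c ∈ Set.Icc (0:ℝ) 1 ∧ d ∈ Set.Icc (0:ℝ) 1 ∧
    y = |(μ (Set.Icc a b ×ˢ Set.Icc c d)).toReal - (ν (Set.Icc a b ×ˢ Set.Icc c d)).toReal|}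

open scoped NNReal

namespace S15
variable {μ ν : Measure (ℝ × ℝ)}

lemma isProb (h : IsPermuton μ) : IsProbabilityMeasure μ := by
  constructor
  have h1 : μ.map Prod.fst Set.univ = μ Set.univ := by
    rw [Measure.map_apply measurable_fst MeasurableSet.univ, Set.preimage_univ]
  rw [h.1] at h1
  rw [← h1]
  simp [Real.volume_Icc]

lemma fst_lt (h : IsPermuton μ) (x : ℝ) (hx : x ∈ Set.Icc (0:ℝ) 1) :
    μ {q : ℝ × ℝ | q.1 < x} = ENNReal.ofReal x := by
  have h0 : μ {q : ℝ × ℝ | q.1 < x} = μ.map Prod.fst (Set.Iio x) := by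
    rw [Measure.map_apply measurable_fst measurableSet_Iio]; rfl
  rw [h0, h.1, Measure.restrict_apply measurableSet_Iio]
  have h1 : Set.Iio x ∩ Set.Icc (0:ℝ) 1 = Set.Ico 0 x := by
    ext t
    simp only [Set.mem_inter_iff, Set.mem_Iio, Set.mem_Icc, Set.mem_Ico]
    constructor
    · rintro ⟨a, b, c⟩; exact ⟨b, a⟩
    · rintro ⟨a, b⟩; exact ⟨b, a, by linarith [hx.2]⟩
  rw [h1, Real.volume_Ico, sub_zero]

lemma snd_lt (h : IsPermuton μ) (y : ℝ) (hy : y ∈ Set.Icc (0:ℝ) 1) :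
    μ {q : ℝ × ℝ | q.2 < y} = ENNReal.ofReal y := by
  have h0 : μ {q : ℝ × ℝ | q.2 < y} = μ.map Prod.snd (Set.Iio y) := by
    rw [Measure.map_apply measurable_snd measurableSet_Iio]; rfl
  rw [h0, h.2, Measure.restrict_apply measurableSet_Iio]
  have h1 : Set.Iio y ∩ Set.Icc (0:ℝ) 1 = Set.Ico 0 y := by
    ext t
    simp only [Set.mem_inter_iff, Set.mem_Iio, Set.mem_Icc, Set.mem_Ico]
    constructor
    · rintro ⟨a, b, c⟩; exact ⟨b, a⟩
    · rintro ⟨a, b⟩; exact ⟨b, a, by linarith [hy.2]⟩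
  rw [h1, Real.volume_Ico, sub_zero]

lemma fst_eq_zero (h : IsPermuton μ) (x : ℝ) : μ {q : ℝ × ℝ | q.1 = x} = 0 := by
  have h0 : μ {q : ℝ × ℝ | q.1 = x} = μ.map Prod.fst {x} := by
    rw [Measure.map_apply measurable_fst (measurableSet_singleton x)]; rfl
  rw [h0, h.1, Measure.restrict_apply (measurableSet_singleton x)]
  exact measure_mono_null Set.inter_subset_left Real.volume_singleton

lemma snd_eq_zero (h : IsPermuton μ) (y : ℝ) : μ {q : ℝ × ℝ | q.2 = y} = 0 := by
  have h0 : μ {q : ℝ × ℝ | q.2 = y} = μ.map Prod.snd {y} := by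
    rw [Measure.map_apply measurable_snd (measurableSet_singleton y)]; rfl
  rw [h0, h.2, Measure.restrict_apply (measurableSet_singleton y)]
  exact measure_mono_null Set.inter_subset_left Real.volume_singleton

lemma ae_mem (h : IsPermuton μ) :
    ∀ᵐ p ∂μ, p ∈ Set.Icc (0:ℝ) 1 ×ˢ Set.Icc (0:ℝ) 1 := by
  have h1 : μ {p : ℝ × ℝ | p.1 ∉ Set.Icc (0:ℝ) 1} = 0 := by
    have h0 : μ {p : ℝ × ℝ | p.1 ∉ Set.Icc (0:ℝ) 1} = μ.map Prod.fst (Set.Icc (0:ℝ) 1)ᶜ := by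
      rw [Measure.map_apply measurable_fst measurableSet_Icc.compl]; rfl
    rw [h0, h.1, Measure.restrict_apply measurableSet_Icc.compl]
    simp
  have h2 : μ {p : ℝ × ℝ | p.2 ∉ Set.Icc (0:ℝ) 1} = 0 := by
    have h0 : μ {p : ℝ × ℝ | p.2 ∉ Set.Icc (0:ℝ) 1} = μ.map Prod.snd (Set.Icc (0:ℝ) 1)ᶜ := by
      rw [Measure.map_apply measurable_snd measurableSet_Icc.compl]; rfl
    rw [h0, h.2, Measure.restrict_apply measurableSet_Icc.compl]
    simp
  rw [MeasureTheory.ae_iff]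
  refine measure_mono_null ?_ (measure_union_null h1 h2)
  intro p hp
  simp only [Set.mem_setOf_eq, Set.prodMk_mem_set_prod_eq, not_and_or,
    Set.mem_union, Set.mem_prod] at hp ⊢
  tauto


variable {n : ℕ}

/-- The cell of configurations whose x-ranking is `σ` and y-ranking is `ρ`. -/
def cell (σ ρ : Equiv.Perm (Fin n)) : Set (Fin n → ℝ × ℝ) :=
  {z | (∀ a b : Fin n, a < b → (z (σ a)).1 < (z (σ b)).1) ∧
       (∀ a b : Fin n, a < b → (z (ρ a)).2 < (z (ρ b)).2)}

lemma measurable_cell (σ ρ : Equiv.Perm (Fin n)) : MeasurableSet (cell σ ρ) := by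
  have h1 : ∀ c d : Fin n, MeasurableSet {z : Fin n → ℝ × ℝ | (z c).1 < (z d).1} := fun c d =>
    measurableSet_lt ((measurable_pi_apply c).fst) ((measurable_pi_apply d).fst)
  have h2 : ∀ c d : Fin n, MeasurableSet {z : Fin n → ℝ × ℝ | (z c).2 < (z d).2} := fun c d =>
    measurableSet_lt ((measurable_pi_apply c).snd) ((measurable_pi_apply d).snd)
  have he : cell σ ρ = (⋂ a, ⋂ b, ⋂ _h : a < b, {z : Fin n → ℝ × ℝ | (z (σ a)).1 < (z (σ b)).1}) ∩
      (⋂ a, ⋂ b, ⋂ _h : a < b, {z : Fin n → ℝ × ℝ | (z (ρ a)).2 < (z (ρ b)).2}) := by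
    ext z; simp [cell, Set.mem_iInter]
  rw [he]
  exact (MeasurableSet.iInter fun a => MeasurableSet.iInter fun b =>
      MeasurableSet.iInter fun _ => h1 _ _).inter
    (MeasurableSet.iInter fun a => MeasurableSet.iInter fun b =>
      MeasurableSet.iInter fun _ => h2 _ _)

lemma measurePreserving_comp (μ : Measure (ℝ × ℝ)) [SigmaFinite μ] (g : Equiv.Perm (Fin n)) :
    MeasurePreserving (fun z : Fin n → ℝ × ℝ => z ∘ g)
      (Measure.pi fun _ => μ) (Measure.pi fun _ => μ) := by
  have h := measurePreserving_piCongrLeft (fun _ : Fin n => μ) ((g : Fin n ≃ Fin n).symm)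
  have hfun : (fun z : Fin n → ℝ × ℝ => z ∘ g) =
      ⇑(MeasurableEquiv.piCongrLeft (fun _ : Fin n => ℝ × ℝ) ((g : Fin n ≃ Fin n).symm)) := by
    funext z
    funext a
    rw [MeasurableEquiv.coe_piCongrLeft]
    have := Equiv.piCongrLeft_apply_apply (fun _ : Fin n => ℝ × ℝ)
      ((g : Fin n ≃ Fin n).symm) z (g a)
    simpa using this.symm
  rw [hfun]; exact h

lemma cell_preimage (σ ρ : Equiv.Perm (Fin n)) :
    (fun z : Fin n → ℝ × ℝ => z ∘ σ) ⁻¹' (cell 1 (σ⁻¹ * ρ)) = cell σ ρ := by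
  ext z
  simp only [cell, Set.mem_preimage, Set.mem_setOf_eq, Function.comp_apply,
    Equiv.Perm.coe_one, id_eq, Equiv.Perm.mul_apply, Equiv.Perm.coe_inv, Equiv.apply_symm_apply]

lemma pi_cell_eq (μ : Measure (ℝ × ℝ)) [SigmaFinite μ] (σ ρ : Equiv.Perm (Fin n)) :
    Measure.pi (fun _ : Fin n => μ) (cell σ ρ) =
      Measure.pi (fun _ : Fin n => μ) (cell 1 (σ⁻¹ * ρ)) := by
  rw [← cell_preimage σ ρ]
  exact (measurePreserving_comp μ σ).measure_preimage
    (measurable_cell 1 (σ⁻¹ * ρ)).nullMeasurableSet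


variable {n : ℕ} {μ : Measure (ℝ × ℝ)}

lemma pi_single_coord (μ : Measure (ℝ × ℝ)) [IsProbabilityMeasure μ] (m : Fin n)
    {T : Set (ℝ × ℝ)} (hT : MeasurableSet T) :
    Measure.pi (fun _ : Fin n => μ) {w | w m ∈ T} = μ T := by
  classical
  have he : {w : Fin n → ℝ × ℝ | w m ∈ T} =
      Set.pi Set.univ (fun r => if r = m then T else Set.univ) := by
    ext w
    simp only [Set.mem_setOf_eq, Set.mem_pi, Set.mem_univ, forall_true_left]
    constructor
    · intro h r; by_cases hr : r = m <;> simp [hr, h]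
    · intro h; have := h m; simpa using this
  rw [he, Measure.pi_pi]
  simp [apply_ite μ, measure_univ]

lemma ties_null_fst [IsProbabilityMeasure μ] (h0 : ∀ x : ℝ, μ {q : ℝ × ℝ | q.1 = x} = 0)
    {a b : Fin (n + 1)} (hab : a ≠ b) :
    Measure.pi (fun _ : Fin (n + 1) => μ) {z | (z a).1 = (z b).1} = 0 := by
  obtain ⟨c, hc⟩ := Fin.exists_succAbove_eq (Ne.symm hab)
  set e := MeasurableEquiv.piFinSuccAbove (fun _ : Fin (n + 1) => ℝ × ℝ) a with he
  have hmp := measurePreserving_piFinSuccAbove (fun _ : Fin (n + 1) => μ) a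
  set S' : Set ((ℝ × ℝ) × (Fin n → ℝ × ℝ)) := {pw | pw.1.1 = (pw.2 c).1} with hS'def
  have hS' : MeasurableSet S' :=
    measurableSet_eq_fun (measurable_fst.fst)
      (((measurable_pi_apply c).comp measurable_snd).fst)
  have hpre : ⇑e ⁻¹' S' = {z | (z a).1 = (z b).1} := by
    ext z
    have h1 : (e z).1 = z a := rfl
    have h2 : (e z).2 c = z (a.succAbove c) := rfl
    simp only [Set.mem_preimage, hS'def, Set.mem_setOf_eq, h1, h2, hc]
  rw [← hpre, hmp.measure_preimage hS'.nullMeasurableSet, Measure.prod_apply hS']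
  have hz : ∀ p : ℝ × ℝ, (Measure.pi fun _ : Fin n => μ) (Prod.mk p ⁻¹' S') = 0 := by
    intro p
    have hsec : Prod.mk p ⁻¹' S' = {w : Fin n → ℝ × ℝ | w c ∈ {q : ℝ × ℝ | q.1 = p.1}} := by
      ext w; simp only [Set.mem_preimage, hS'def, Set.mem_setOf_eq, eq_comm]
    rw [hsec, pi_single_coord μ c (measurableSet_eq_fun measurable_fst measurable_const)]
    exact h0 p.1
  simp only [hz, lintegral_zero]

lemma ties_null_snd [IsProbabilityMeasure μ] (h0 : ∀ y : ℝ, μ {q : ℝ × ℝ | q.2 = y} = 0)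
    {a b : Fin (n + 1)} (hab : a ≠ b) :
    Measure.pi (fun _ : Fin (n + 1) => μ) {z | (z a).2 = (z b).2} = 0 := by
  obtain ⟨c, hc⟩ := Fin.exists_succAbove_eq (Ne.symm hab)
  set e := MeasurableEquiv.piFinSuccAbove (fun _ : Fin (n + 1) => ℝ × ℝ) a with he
  have hmp := measurePreserving_piFinSuccAbove (fun _ : Fin (n + 1) => μ) a
  set S' : Set ((ℝ × ℝ) × (Fin n → ℝ × ℝ)) := {pw | pw.1.2 = (pw.2 c).2} with hS'def
  have hS' : MeasurableSet S' :=
    measurableSet_eq_fun (measurable_fst.snd)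
      (((measurable_pi_apply c).comp measurable_snd).snd)
  have hpre : ⇑e ⁻¹' S' = {z | (z a).2 = (z b).2} := by
    ext z
    have h1 : (e z).1 = z a := rfl
    have h2 : (e z).2 c = z (a.succAbove c) := rfl
    simp only [Set.mem_preimage, hS'def, Set.mem_setOf_eq, h1, h2, hc]
  rw [← hpre, hmp.measure_preimage hS'.nullMeasurableSet, Measure.prod_apply hS']
  have hz : ∀ p : ℝ × ℝ, (Measure.pi fun _ : Fin n => μ) (Prod.mk p ⁻¹' S') = 0 := by
    intro p
    have hsec : Prod.mk p ⁻¹' S' = {w : Fin n → ℝ × ℝ | w c ∈ {q : ℝ × ℝ | q.2 = p.2}} := by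
      ext w; simp only [Set.mem_preimage, hS'def, Set.mem_setOf_eq, eq_comm]
    rw [hsec, pi_single_coord μ c (measurableSet_eq_fun measurable_snd measurable_const)]
    exact h0 p.2
  simp only [hz, lintegral_zero]

/-- configurations with pairwise distinct x-coordinates and y-coordinates -/
def distinct : Set (Fin n → ℝ × ℝ) :=
  {z | ∀ a b : Fin n, a ≠ b → (z a).1 ≠ (z b).1 ∧ (z a).2 ≠ (z b).2}

lemma compl_distinct_null [IsProbabilityMeasure μ]
    (h1 : ∀ x : ℝ, μ {q : ℝ × ℝ | q.1 = x} = 0)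
    (h2 : ∀ y : ℝ, μ {q : ℝ × ℝ | q.2 = y} = 0) :
    Measure.pi (fun _ : Fin (n + 1) => μ) (distinctᶜ) = 0 := by
  have hsub : (distinct : Set (Fin (n + 1) → ℝ × ℝ))ᶜ ⊆
      ⋃ a, ⋃ b, ⋃ _h : a ≠ b,
        ({z : Fin (n + 1) → ℝ × ℝ | (z a).1 = (z b).1} ∪ {z | (z a).2 = (z b).2}) := by
    intro z hz
    simp only [distinct, Set.mem_compl_iff, Set.mem_setOf_eq, not_forall] at hz
    obtain ⟨a, b, hab, h⟩ := hz
    rw [not_and_or, not_ne_iff, not_ne_iff] at h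
    simp only [Set.mem_iUnion, Set.mem_union, Set.mem_setOf_eq]
    exact ⟨a, b, hab, h⟩
  refine measure_mono_null hsub ?_
  refine measure_iUnion_null fun a => measure_iUnion_null fun b => measure_iUnion_null fun hab => ?_
  exact measure_union_null (ties_null_fst h1 hab) (ties_null_snd h2 hab)


variable {μ : Measure (ℝ × ℝ)}


/-- the comparison event -/
def Bset (i j : ℕ) : Set (Fin (i + j + 1) → ℝ × ℝ) :=
  {z | ∀ m : Fin (i + j), ((m : ℕ) < i → (z m.succ).1 < (z 0).1) ∧
       (i ≤ (m : ℕ) → (z m.succ).2 < (z 0).2)}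

def Bset' (i j : ℕ) : Set ((ℝ × ℝ) × (Fin (i + j) → ℝ × ℝ)) :=
  {pw | ∀ m : Fin (i + j), ((m : ℕ) < i → (pw.2 m).1 < pw.1.1) ∧
       (i ≤ (m : ℕ) → (pw.2 m).2 < pw.1.2)}

lemma measurable_Bset' (i j : ℕ) : MeasurableSet (Bset' i j) := by
  have he : Bset' i j = ⋂ m : Fin (i + j),
      ({pw : (ℝ × ℝ) × (Fin (i + j) → ℝ × ℝ) | (m : ℕ) < i → (pw.2 m).1 < pw.1.1} ∩
       {pw | i ≤ (m : ℕ) → (pw.2 m).2 < pw.1.2}) := by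
    ext pw; simp [Bset', Set.mem_iInter, forall_and]
  rw [he]
  refine MeasurableSet.iInter fun m => MeasurableSet.inter ?_ ?_
  · by_cases hm : (m : ℕ) < i
    · have : {pw : (ℝ × ℝ) × (Fin (i + j) → ℝ × ℝ) | (m : ℕ) < i → (pw.2 m).1 < pw.1.1} =
          {pw | (pw.2 m).1 < pw.1.1} := by ext pw; simp [hm]
      rw [this]
      exact measurableSet_lt (((measurable_pi_apply m).comp measurable_snd).fst)
        (measurable_fst.fst)
    · have : {pw : (ℝ × ℝ) × (Fin (i + j) → ℝ × ℝ) | (m : ℕ) < i → (pw.2 m).1 < pw.1.1} =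
          Set.univ := by ext pw; simp [hm]
      rw [this]; exact MeasurableSet.univ
  · by_cases hm : i ≤ (m : ℕ)
    · have : {pw : (ℝ × ℝ) × (Fin (i + j) → ℝ × ℝ) | i ≤ (m : ℕ) → (pw.2 m).2 < pw.1.2} =
          {pw | (pw.2 m).2 < pw.1.2} := by ext pw; simp [hm]
      rw [this]
      exact measurableSet_lt (((measurable_pi_apply m).comp measurable_snd).snd)
        (measurable_fst.snd)
    · have : {pw : (ℝ × ℝ) × (Fin (i + j) → ℝ × ℝ) | i ≤ (m : ℕ) → (pw.2 m).2 < pw.1.2} =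
          Set.univ := by ext pw; simp [hm]
      rw [this]; exact MeasurableSet.univ

lemma Bset_preimage (i j : ℕ) :
    ⇑(MeasurableEquiv.piFinSuccAbove (fun _ : Fin (i + j + 1) => ℝ × ℝ) 0) ⁻¹' (Bset' i j) =
      Bset i j := by
  ext z
  set e := MeasurableEquiv.piFinSuccAbove (fun _ : Fin (i + j + 1) => ℝ × ℝ) 0
  have h1 : (e z).1 = z 0 := rfl
  have h2 : ∀ m, (e z).2 m = z ((0 : Fin (i + j + 1)).succAbove m) := fun _ => rfl
  simp only [Set.mem_preimage, Bset', Bset, Set.mem_setOf_eq, h1, h2, Fin.zero_succAbove]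

lemma prod_if_pow (i j : ℕ) (A B : ENNReal) :
    (∏ m : Fin (i + j), if (m : ℕ) < i then A else B) = A ^ i * B ^ j := by
  rw [Fin.prod_univ_add (f := fun m : Fin (i + j) => if (m : ℕ) < i then A else B)]
  congr 1
  · rw [Finset.prod_congr rfl (fun a _ => ?_), Finset.prod_const, Finset.card_univ,
      Fintype.card_fin]
    simp [Fin.is_lt a]
  · rw [Finset.prod_congr rfl (fun a _ => ?_), Finset.prod_const, Finset.card_univ,
      Fintype.card_fin]
    simp

lemma section_Bset' (i j : ℕ) (p : ℝ × ℝ) :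
    Prod.mk p ⁻¹' (Bset' i j) = Set.pi Set.univ
      (fun m : Fin (i + j) => if (m : ℕ) < i then {q : ℝ × ℝ | q.1 < p.1}
        else {q : ℝ × ℝ | q.2 < p.2}) := by
  ext w
  simp only [Set.mem_preimage, Bset', Set.mem_setOf_eq, Set.mem_pi, Set.mem_univ,
    forall_true_left]
  refine forall_congr' fun m => ?_
  by_cases hm : (m : ℕ) < i
  · simp [hm, not_le.mpr hm]
  · simp [hm, not_lt.mp hm]

lemma pi_Bset_eq (i j : ℕ) [IsProbabilityMeasure μ] (h : IsPermuton μ) :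
    Measure.pi (fun _ : Fin (i + j + 1) => μ) (Bset i j) =
      ∫⁻ p, (ENNReal.ofReal p.1) ^ i * (ENNReal.ofReal p.2) ^ j ∂μ := by
  have hmp := measurePreserving_piFinSuccAbove (fun _ : Fin (i + j + 1) => μ) 0
  rw [← Bset_preimage i j, hmp.measure_preimage (measurable_Bset' i j).nullMeasurableSet,
    Measure.prod_apply (measurable_Bset' i j)]
  have hsec : ∀ p : ℝ × ℝ, (Measure.pi fun _ : Fin (i + j) => μ) (Prod.mk p ⁻¹' Bset' i j)
      = (μ {q : ℝ × ℝ | q.1 < p.1}) ^ i * (μ {q : ℝ × ℝ | q.2 < p.2}) ^ j := by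
    intro p
    rw [section_Bset' i j p, Measure.pi_pi, ← prod_if_pow i j]
    refine Finset.prod_congr rfl fun m _ => ?_
    by_cases hm : (m : ℕ) < i <;> simp [hm]
  have hae : ∀ᵐ p ∂μ, (Measure.pi fun _ : Fin (i + j) => μ) (Prod.mk p ⁻¹' Bset' i j) =
      (ENNReal.ofReal p.1) ^ i * (ENNReal.ofReal p.2) ^ j := by
    filter_upwards [ae_mem h] with p hp
    rw [hsec p, fst_lt h p.1 hp.1, snd_lt h p.2 hp.2]
  exact lintegral_congr_ae hae

lemma cell_strictMono_fst {σ ρ : Equiv.Perm (Fin n)} {z : Fin n → ℝ × ℝ} (hz : z ∈ cell σ ρ) :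
    StrictMono fun a => (z (σ a)).1 := fun a b hab => hz.1 a b hab

lemma cell_strictMono_snd {σ ρ : Equiv.Perm (Fin n)} {z : Fin n → ℝ × ℝ} (hz : z ∈ cell σ ρ) :
    StrictMono fun a => (z (ρ a)).2 := fun a b hab => hz.2 a b hab

lemma cell_inj_fst {σ ρ : Equiv.Perm (Fin n)} {z : Fin n → ℝ × ℝ} (hz : z ∈ cell σ ρ) :
    Function.Injective fun a => (z a).1 := by
  intro a b hab
  have h1 : (fun c => (z (σ c)).1) (σ⁻¹ a) = (fun c => (z (σ c)).1) (σ⁻¹ b) := by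
    simp only [Equiv.Perm.coe_inv, Equiv.apply_symm_apply]
    exact hab
  have h2 := (cell_strictMono_fst hz).injective h1
  have h3 := congrArg σ h2
  simpa using h3

lemma cell_inj_snd {σ ρ : Equiv.Perm (Fin n)} {z : Fin n → ℝ × ℝ} (hz : z ∈ cell σ ρ) :
    Function.Injective fun a => (z a).2 := by
  intro a b hab
  have h1 : (fun c => (z (ρ c)).2) (ρ⁻¹ a) = (fun c => (z (ρ c)).2) (ρ⁻¹ b) := by
    simp only [Equiv.Perm.coe_inv, Equiv.apply_symm_apply]
    exact hab
  have h2 := (cell_strictMono_snd hz).injective h1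
  have h3 := congrArg ρ h2
  simpa using h3

lemma perm_eq_of_strictMono {f : Fin n → ℝ} (hf : Function.Injective f)
    {σ σ' : Equiv.Perm (Fin n)} (hs : StrictMono (f ∘ σ)) (hs' : StrictMono (f ∘ σ')) :
    σ = σ' := by
  have hr : Set.range (f ∘ σ) = Set.range (f ∘ σ') := by
    rw [σ.surjective.range_comp f, σ'.surjective.range_comp f]
  haveI hwf : WellFoundedLT (Fin n) := inferInstance
  have h5 : f ∘ ⇑σ = f ∘ ⇑σ' := (@StrictMono.range_inj (Fin n) ℝ _ _ hwf _ _ hs hs').1 hr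
  apply Equiv.ext
  intro a
  exact hf (congrFun h5 a)

lemma cell_disjoint {g g' : Equiv.Perm (Fin n) × Equiv.Perm (Fin n)} (hgg : g ≠ g') :
    Disjoint (cell g.1 g.2) (cell g'.1 g'.2) := by
  rw [Set.disjoint_left]
  intro z hz hz'
  apply hgg
  have hσ : g.1 = g'.1 :=
    perm_eq_of_strictMono (cell_inj_fst hz) (cell_strictMono_fst hz) (cell_strictMono_fst hz')
  have hρ : g.2 = g'.2 :=
    perm_eq_of_strictMono (cell_inj_snd hz) (cell_strictMono_snd hz) (cell_strictMono_snd hz')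
  exact Prod.ext hσ hρ


def Pset (i j : ℕ) : Finset (Equiv.Perm (Fin (i + j + 1)) × Equiv.Perm (Fin (i + j + 1))) :=
  Finset.univ.filter (fun g => ∀ m : Fin (i + j),
    ((m : ℕ) < i → g.1⁻¹ m.succ < g.1⁻¹ 0) ∧ (i ≤ (m : ℕ) → g.2⁻¹ m.succ < g.2⁻¹ 0))

lemma Bset_inter_distinct (i j : ℕ) :
    Bset i j ∩ distinct = ⋃ g ∈ Pset i j, cell g.1 g.2 := by
  ext z
  simp only [Set.mem_inter_iff, Set.mem_iUnion]
  constructor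
  · rintro ⟨hB, hD⟩
    simp only [Bset, Set.mem_setOf_eq] at hB
    simp only [distinct, Set.mem_setOf_eq] at hD
    have hf : Function.Injective fun a => (z a).1 := by
      intro a b hab
      by_contra hne
      exact (hD a b hne).1 hab
    have hg : Function.Injective fun a => (z a).2 := by
      intro a b hab
      by_contra hne
      exact (hD a b hne).2 hab
    set σ := Tuple.sort fun a => (z a).1 with hσ
    set ρ := Tuple.sort fun a => (z a).2 with hρ
    have hsm : StrictMono ((fun a => (z a).1) ∘ σ) :=
      (Tuple.monotone_sort _).strictMono_of_injective (hf.comp σ.injective)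
    have hsm' : StrictMono ((fun a => (z a).2) ∘ ρ) :=
      (Tuple.monotone_sort _).strictMono_of_injective (hg.comp ρ.injective)
    refine ⟨(σ, ρ), ?_, ?_⟩
    · rw [Pset, Finset.mem_filter]
      refine ⟨Finset.mem_univ _, fun m => ⟨fun hm => ?_, fun hm => ?_⟩⟩
      · have h1 : (z m.succ).1 < (z 0).1 := (hB m).1 hm
        rw [← hsm.lt_iff_lt]
        simpa [Equiv.Perm.coe_inv, Equiv.apply_symm_apply] using h1
      · have h1 : (z m.succ).2 < (z 0).2 := (hB m).2 hm
        rw [← hsm'.lt_iff_lt]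
        simpa [Equiv.Perm.coe_inv, Equiv.apply_symm_apply] using h1
    · exact ⟨fun a b h => hsm h, fun a b h => hsm' h⟩
  · rintro ⟨g, hgP, hz⟩
    rw [Pset, Finset.mem_filter] at hgP
    refine ⟨?_, ?_⟩
    · intro m
      constructor
      · intro hm
        have h1 := hz.1 _ _ ((hgP.2 m).1 hm)
        simpa [Equiv.Perm.coe_inv, Equiv.apply_symm_apply] using h1
      · intro hm
        have h1 := hz.2 _ _ ((hgP.2 m).2 hm)
        simpa [Equiv.Perm.coe_inv, Equiv.apply_symm_apply] using h1
    · intro a b hab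
      exact ⟨fun hEq => hab (cell_inj_fst hz hEq), fun hEq => hab (cell_inj_snd hz hEq)⟩

lemma pi_Bset_decomp (i j : ℕ) [IsProbabilityMeasure μ]
    (h1 : ∀ x : ℝ, μ {q : ℝ × ℝ | q.1 = x} = 0)
    (h2 : ∀ y : ℝ, μ {q : ℝ × ℝ | q.2 = y} = 0) :
    Measure.pi (fun _ : Fin (i + j + 1) => μ) (Bset i j) =
      ∑ g ∈ Pset i j, Measure.pi (fun _ : Fin (i + j + 1) => μ) (cell g.1 g.2) := by
  set π := Measure.pi (fun _ : Fin (i + j + 1) => μ) with hπ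
  have hnull : π (distinctᶜ) = 0 := compl_distinct_null h1 h2
  have hBD : π (Bset i j) = π (Bset i j ∩ distinct) := by
    apply le_antisymm
    · calc π (Bset i j) ≤ π ((Bset i j ∩ distinct) ∪ distinctᶜ) := by
            apply measure_mono
            intro z hz
            by_cases hd : z ∈ distinct
            · exact Or.inl ⟨hz, hd⟩
            · exact Or.inr hd
        _ ≤ π (Bset i j ∩ distinct) + π (distinctᶜ) := measure_union_le _ _
        _ = π (Bset i j ∩ distinct) := by rw [hnull, add_zero]
    · exact measure_mono Set.inter_subset_left
  rw [hBD, Bset_inter_distinct]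
  exact measure_biUnion_finset (fun g _ g' _ hgg => cell_disjoint hgg)
    (fun g _ => measurable_cell g.1 g.2)

lemma permDensity_eq (τ : Equiv.Perm (Fin n)) (μ : Measure (ℝ × ℝ)) :
    permDensity τ μ =
      (Nat.factorial n : ℝ) * ((Measure.pi fun _ : Fin n => μ) (cell 1 τ⁻¹)).toReal := rfl

lemma integral_moment_eq (i j : ℕ) (h : IsPermuton μ) :
    ∫ p, p.1 ^ i * p.2 ^ j ∂μ =
      ((Measure.pi fun _ : Fin (i + j + 1) => μ) (Bset i j)).toReal := by
  haveI := isProb h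
  have hnn : 0 ≤ᵐ[μ] fun p : ℝ × ℝ => p.1 ^ i * p.2 ^ j := by
    filter_upwards [ae_mem h] with p hp
    exact mul_nonneg (pow_nonneg hp.1.1 _) (pow_nonneg hp.2.1 _)
  have hm : AEStronglyMeasurable (fun p : ℝ × ℝ => p.1 ^ i * p.2 ^ j) μ :=
    ((continuous_fst.pow i).mul (continuous_snd.pow j)).aestronglyMeasurable
  rw [integral_eq_lintegral_of_nonneg_ae hnn hm, pi_Bset_eq i j h]
  congr 1
  apply lintegral_congr_ae
  filter_upwards [ae_mem h] with p hp
  rw [ENNReal.ofReal_mul (pow_nonneg hp.1.1 _), ENNReal.ofReal_pow hp.1.1,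
    ENNReal.ofReal_pow hp.2.1]

lemma part1 (i j : ℕ) :
    ∃ (S : Finset (Equiv.Perm (Fin (i + j + 1)))) (C : Equiv.Perm (Fin (i + j + 1)) → ℝ),
      (∀ τ ∈ S, 0 < C τ) ∧
      ∀ μ : Measure (ℝ × ℝ), IsPermuton μ →
        ∫ p, p.1 ^ i * p.2 ^ j ∂μ = ∑ τ ∈ S, C τ * permDensity τ μ := by
  classical
  have hk0 : (Nat.factorial (i + j + 1) : ℝ) ≠ 0 :=
    Nat.cast_ne_zero.mpr (Nat.factorial_ne_zero _)
  refine ⟨(Pset i j).image (fun g => g.2⁻¹ * g.1),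
    fun τ => ((((Pset i j).filter (fun g => g.2⁻¹ * g.1 = τ)).card : ℝ) /
      (Nat.factorial (i + j + 1) : ℝ)), ?_, ?_⟩
  · intro τ hτ
    rw [Finset.mem_image] at hτ
    obtain ⟨g, hg, hgτ⟩ := hτ
    apply div_pos
    · exact_mod_cast Nat.cast_pos.mpr
        (Finset.card_pos.mpr ⟨g, Finset.mem_filter.mpr ⟨hg, hgτ⟩⟩)
    · exact_mod_cast Nat.cast_pos.mpr (Nat.factorial_pos _)
  · intro μ h
    haveI := isProb h
    rw [integral_moment_eq i j h, pi_Bset_decomp i j (fst_eq_zero h) (snd_eq_zero h)]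
    rw [ENNReal.toReal_sum (fun g _ => measure_ne_top _ _)]
    have hterm : ∀ g ∈ Pset i j,
        ((Measure.pi fun _ : Fin (i + j + 1) => μ) (cell g.1 g.2)).toReal
          = permDensity (g.2⁻¹ * g.1) μ / (Nat.factorial (i + j + 1) : ℝ) := by
      intro g _
      rw [pi_cell_eq μ g.1 g.2, permDensity_eq, mul_inv_rev, inv_inv]
      exact (mul_div_cancel_left₀ _ hk0).symm
    rw [Finset.sum_congr rfl hterm]
    have hsc := Finset.sum_comp (s := Pset i j)
      (f := fun τ : Equiv.Perm (Fin (i + j + 1)) =>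
        permDensity τ μ / (Nat.factorial (i + j + 1) : ℝ))
      (g := fun g : Equiv.Perm (Fin (i + j + 1)) × Equiv.Perm (Fin (i + j + 1)) =>
        g.2⁻¹ * g.1)
    rw [hsc]
    refine Finset.sum_congr rfl fun τ _ => ?_
    rw [nsmul_eq_mul]
    ring

variable {ν : Measure (ℝ × ℝ)}


def K2 : Set (ℝ × ℝ) := Set.Icc (0:ℝ) 1 ×ˢ Set.Icc (0:ℝ) 1

lemma isCompact_K2 : IsCompact K2 := isCompact_Icc.prod isCompact_Icc

lemma ae_memK (h : IsPermuton μ) : ∀ᵐ p ∂μ, p ∈ K2 := ae_mem h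

lemma integrable_of_continuous (h : IsPermuton μ) {f : ℝ × ℝ → ℝ} (hf : Continuous f) :
    Integrable f μ := by
  haveI := isProb h
  obtain ⟨Cb, hCb⟩ := isCompact_K2.exists_bound_of_continuousOn hf.continuousOn
  refine Integrable.mono' (integrable_const Cb) hf.aestronglyMeasurable ?_
  filter_upwards [ae_memK h] with p hp
  exact hCb p hp

noncomputable def fstC : C(ℝ × ℝ, ℝ) := ⟨Prod.fst, continuous_fst⟩
noncomputable def sndC : C(ℝ × ℝ, ℝ) := ⟨Prod.snd, continuous_snd⟩

lemma monomial_mem {g : C(ℝ × ℝ, ℝ)}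
    (hg : g ∈ Submonoid.closure ({fstC, sndC} : Set C(ℝ × ℝ, ℝ))) :
    ∃ a b : ℕ, g = fstC ^ a * sndC ^ b := by
  induction hg using Submonoid.closure_induction with
  | mem x hx =>
    rcases hx with h | h
    · exact ⟨1, 0, by rw [h]; ring⟩
    · exact ⟨0, 1, by rw [h]; ring⟩
  | one => exact ⟨0, 0, by ring⟩
  | mul x y hx hy ihx ihy =>
    obtain ⟨a, b, rfl⟩ := ihx
    obtain ⟨a', b', rfl⟩ := ihy
    exact ⟨a + a', b + b', by ring⟩

lemma integral_adjoin_eq (hμ : IsPermuton μ) (hν : IsPermuton ν)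
    (hmom : ∀ a b : ℕ, ∫ p, p.1 ^ a * p.2 ^ b ∂μ = ∫ p, p.1 ^ a * p.2 ^ b ∂ν)
    {g : C(ℝ × ℝ, ℝ)} (hg : g ∈ Algebra.adjoin ℝ ({fstC, sndC} : Set C(ℝ × ℝ, ℝ))) :
    ∫ p, g p ∂μ = ∫ p, g p ∂ν := by
  have hspan : g ∈ Submodule.span ℝ
      ((Submonoid.closure ({fstC, sndC} : Set C(ℝ × ℝ, ℝ))) : Set C(ℝ × ℝ, ℝ)) := by
    have := Algebra.adjoin_eq_span (R := ℝ) (s := ({fstC, sndC} : Set C(ℝ × ℝ, ℝ)))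
    rw [← this]
    exact hg
  clear hg
  induction hspan using Submodule.span_induction with
  | mem x hx =>
    obtain ⟨a, b, rfl⟩ := monomial_mem hx
    have hfun : ∀ p : ℝ × ℝ, (fstC ^ a * sndC ^ b) p = p.1 ^ a * p.2 ^ b := by
      intro p
      simp [fstC, sndC]
    simp_rw [hfun]
    exact hmom a b
  | zero => simp
  | add x y hx hy ihx ihy =>
    have hix : Continuous x := x.continuous
    simp_rw [ContinuousMap.add_apply]
    rw [integral_add (integrable_of_continuous hμ x.continuous)
        (integrable_of_continuous hμ y.continuous),
      integral_add (integrable_of_continuous hν x.continuous)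
        (integrable_of_continuous hν y.continuous), ihx, ihy]
  | smul c x hx ihx =>
    simp_rw [ContinuousMap.smul_apply, smul_eq_mul]
    rw [integral_const_mul, integral_const_mul, ihx]


lemma measure_eq (hμ : IsPermuton μ) (hν : IsPermuton ν)
    (hmom : ∀ a b : ℕ, ∫ p, p.1 ^ a * p.2 ^ b ∂μ = ∫ p, p.1 ^ a * p.2 ^ b ∂ν) :
    μ = ν := by
  haveI := isProb hμ
  haveI := isProb hν
  have hint : ∀ f : ℝ × ℝ → ℝ, Continuous f → ∫ p, f p ∂μ = ∫ p, f p ∂ν := by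
    intro f hf
    have key : ∀ ε : ℝ, 0 < ε → |∫ p, f p ∂μ - ∫ p, f p ∂ν| ≤ 2 * ε := by
      intro ε hε
      haveI : CompactSpace K2 := isCompact_iff_compactSpace.mp isCompact_K2
      set ι : C(K2, ℝ × ℝ) := ⟨Subtype.val, continuous_subtype_val⟩ with hι
      set R : C(ℝ × ℝ, ℝ) →ₐ[ℝ] C(K2, ℝ) := ContinuousMap.compRightAlgHom ℝ ℝ ι with hR
      set A : Subalgebra ℝ C(K2, ℝ) :=
        (Algebra.adjoin ℝ ({fstC, sndC} : Set C(ℝ × ℝ, ℝ))).map R with hA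
      have hsep : A.SeparatesPoints := by
        intro x y hxy
        have hval : (x : ℝ × ℝ) ≠ (y : ℝ × ℝ) := fun hv => hxy (Subtype.ext hv)
        by_cases h1 : (x : ℝ × ℝ).1 = (y : ℝ × ℝ).1
        · have h2 : (x : ℝ × ℝ).2 ≠ (y : ℝ × ℝ).2 := by
            intro h2
            exact hval (Prod.ext h1 h2)
          refine ⟨_, ⟨R sndC, ?_, rfl⟩, h2⟩
          exact Subalgebra.mem_map.mpr
            ⟨sndC, Algebra.subset_adjoin (Set.mem_insert_iff.mpr (Or.inr rfl)), rfl⟩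
        · refine ⟨_, ⟨R fstC, ?_, rfl⟩, h1⟩
          exact Subalgebra.mem_map.mpr
            ⟨fstC, Algebra.subset_adjoin (Set.mem_insert _ _), rfl⟩
      set fK : C(K2, ℝ) := ContinuousMap.mk (fun q : K2 => f q)
        (hf.comp continuous_subtype_val) with hfK
      obtain ⟨⟨g0, hg0A⟩, hg0near⟩ :=
        ContinuousMap.exists_mem_subalgebra_near_continuousMap_of_separatesPoints
          A hsep fK ε hε
      obtain ⟨h0, hh0adj, hh0⟩ := Subalgebra.mem_map.mp hg0A
      have hnear : ∀ p, p ∈ K2 → |h0 p - f p| ≤ ε := by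
        intro p hp
        have h2 := ContinuousMap.norm_coe_le_norm (g0 - fK) ⟨p, hp⟩
        have h3 : (g0 - fK) (⟨p, hp⟩ : K2) = h0 p - f p := by
          rw [ContinuousMap.sub_apply, ← hh0]
          rfl
        rw [h3] at h2
        calc |h0 p - f p| ≤ ‖g0 - fK‖ := h2
          _ ≤ ε := le_of_lt hg0near
      have hbμ : |∫ p, f p ∂μ - ∫ p, h0 p ∂μ| ≤ ε := by
        rw [← integral_sub (integrable_of_continuous hμ hf)
          (integrable_of_continuous hμ h0.continuous)]
        have hb := norm_integral_le_of_norm_le_const (μ := μ) (C := ε)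
          (f := fun p => f p - h0 p) ?_
        · simpa [measure_univ] using hb
        · filter_upwards [ae_memK hμ] with p hp
          rw [Real.norm_eq_abs, abs_sub_comm]
          exact hnear p hp
      have hbν : |∫ p, f p ∂ν - ∫ p, h0 p ∂ν| ≤ ε := by
        rw [← integral_sub (integrable_of_continuous hν hf)
          (integrable_of_continuous hν h0.continuous)]
        have hb := norm_integral_le_of_norm_le_const (μ := ν) (C := ε)
          (f := fun p => f p - h0 p) ?_
        · simpa [measure_univ] using hb
        · filter_upwards [ae_memK hν] with p hp
          rw [Real.norm_eq_abs, abs_sub_comm]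
          exact hnear p hp
      have hmid : ∫ p, h0 p ∂μ = ∫ p, h0 p ∂ν := integral_adjoin_eq hμ hν hmom hh0adj
      have hsplit : ∫ p, f p ∂μ - ∫ p, f p ∂ν =
          (∫ p, f p ∂μ - ∫ p, h0 p ∂μ) + (∫ p, h0 p ∂ν - ∫ p, f p ∂ν) := by
        rw [hmid]; ring
      rw [hsplit]
      calc |(∫ p, f p ∂μ - ∫ p, h0 p ∂μ) + (∫ p, h0 p ∂ν - ∫ p, f p ∂ν)|
          ≤ |∫ p, f p ∂μ - ∫ p, h0 p ∂μ| + |∫ p, h0 p ∂ν - ∫ p, f p ∂ν| := abs_add_le _ _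
        _ ≤ ε + ε := by
            refine add_le_add hbμ ?_
            rw [abs_sub_comm]
            exact hbν
        _ = 2 * ε := by ring
    by_contra hne
    have hpos : 0 < |∫ p, f p ∂μ - ∫ p, f p ∂ν| := abs_pos.mpr (sub_ne_zero.mpr hne)
    have hk := key (|∫ p, f p ∂μ - ∫ p, f p ∂ν| / 4) (by positivity)
    linarith
  apply ext_of_forall_lintegral_eq_of_IsFiniteMeasure
  intro f
  have hc : Continuous fun p : ℝ × ℝ => ((f p : ℝ≥0) : ℝ) :=
    NNReal.continuous_coe.comp f.continuous
  rw [lintegral_coe_eq_integral _ (integrable_of_continuous hμ hc),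
    lintegral_coe_eq_integral _ (integrable_of_continuous hν hc)]
  exact congrArg ENNReal.ofReal (hint _ hc)


end S15


theorem stmt15 (i j : ℕ) :
    (∃ (S : Finset (Equiv.Perm (Fin (i + j + 1)))) (C : Equiv.Perm (Fin (i + j + 1)) → ℝ),
      (∀ τ ∈ S, 0 < C τ) ∧
      ∀ μ : Measure (ℝ × ℝ), IsPermuton μ →
        ∫ p, p.1 ^ i * p.2 ^ j ∂μ = ∑ τ ∈ S, C τ * permDensity τ μ) ∧
    (∀ μ ν : Measure (ℝ × ℝ), IsPermuton μ → IsPermuton ν →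
      (∀ (k : ℕ) (τ : Equiv.Perm (Fin k)), permDensity τ μ = permDensity τ ν) → μ = ν) := by
  constructor
  · exact S15.part1 i j
  · intro μ ν hμ hν hp
    apply S15.measure_eq hμ hν
    intro a b
    obtain ⟨S, C, hpos, hform⟩ := S15.part1 a b
    rw [hform μ hμ, hform ν hν]
    refine Finset.sum_congr rfl fun τ _ => ?_
    rw [hp _ τ]
end

section
/- Weak regularity lemma for [0,1]-valued functions: for every ε > 0, every interval partition 𝒫 of [0,1], and every integrable f : [0,1] → [0,1], there exists an interval partition 𝒫_ε refining 𝒫 with at most |𝒫| + 2ε^{−2} parts such that ‖f − 𝔼(f|𝒫_ε)‖_□ ≤ ε. -/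
open MeasureTheory

/-- A finite partition of `(0,1]` into nondegenerate (half-open) intervals. -/
def IsIntervalPartition (P : Finset (Set ℝ)) : Prop :=
  (∀ s ∈ P, ∃ a b : ℝ, a < b ∧ s = Set.Ioc a b) ∧
  (P : Set (Set ℝ)).PairwiseDisjoint id ∧
  ⋃₀ (P : Set (Set ℝ)) = Set.Ioc (0:ℝ) 1

/-- A finite measurable partition of `(0,1]` into atoms of positive measure. -/
def IsMeasPartition (P : Finset (Set ℝ)) : Prop :=
  (∀ s ∈ P, MeasurableSet s ∧ 0 < volume s) ∧
  (P : Set (Set ℝ)).PairwiseDisjoint id ∧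
  ⋃₀ (P : Set (Set ℝ)) = Set.Ioc (0:ℝ) 1

/-- `𝒬` refines `𝒫`: every atom of `𝒬` is contained in an atom of `𝒫`. -/
def Refines (Q P : Finset (Set ℝ)) : Prop := ∀ q ∈ Q, ∃ p ∈ P, q ⊆ p

/-- The conditional expectation `𝔼(f|𝒫)` of `f` with respect to a finite partition `𝒫`. -/
noncomputable def condExpPart (P : Finset (Set ℝ)) (f : ℝ → ℝ) (x : ℝ) : ℝ :=
  ∑ s ∈ P, Set.indicator s (fun _ => (∫ t in s, f t) / (volume s).toReal) x

/-- The interval norm `‖h‖_□ = sup_{I ⊆ [0,1] interval} |∫_I h|`. -/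
noncomputable def boxNorm (h : ℝ → ℝ) : ℝ :=
  sSup {y | ∃ a b : ℝ, 0 ≤ a ∧ a ≤ b ∧ b ≤ 1 ∧ y = |∫ x in a..b, h x|}

section Aux

variable {Q : Finset (Set ℝ)} {f : ℝ → ℝ}

lemma atoms_sub (hQ : IsIntervalPartition Q) {q : Set ℝ} (hq : q ∈ Q) :
    q ⊆ Set.Ioc (0:ℝ) 1 := by
  rw [← hQ.2.2]; exact Set.subset_sUnion_of_mem hq

lemma atoms_meas (hQ : IsIntervalPartition Q) {q : Set ℝ} (hq : q ∈ Q) :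
    MeasurableSet q ∧ 0 < volume q ∧ volume q ≠ ⊤ := by
  obtain ⟨a, b, hab, rfl⟩ := hQ.1 q hq
  refine ⟨measurableSet_Ioc, ?_, ?_⟩ <;> rw [Real.volume_Ioc]
  · exact ENNReal.ofReal_pos.2 (sub_pos.2 hab)
  · exact ENNReal.ofReal_ne_top

lemma condExp_integrable (hQ : IsIntervalPartition Q) :
    Integrable (condExpPart Q f) := by
  apply integrable_finset_sum
  intro s hs
  obtain ⟨hm, _, hvol⟩ := atoms_meas hQ hs
  exact (integrable_indicator_iff hm).2 (integrableOn_const hvol)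

lemma condExp_mem (hQ : IsIntervalPartition Q) (hf : IntegrableOn f (Set.Icc (0:ℝ) 1))
    (hf1 : ∀ x ∈ Set.Icc (0:ℝ) 1, f x ∈ Set.Icc (0:ℝ) 1) (x : ℝ) :
    condExpPart Q f x ∈ Set.Icc (0:ℝ) 1 := by
  have havg : ∀ q ∈ Q, (∫ t in q, f t) / (volume q).toReal ∈ Set.Icc (0:ℝ) 1 := by
    intro q hq
    obtain ⟨hm, hpos, htop⟩ := atoms_meas hQ hq
    have hsub : q ⊆ Set.Icc 0 1 := (atoms_sub hQ hq).trans Set.Ioc_subset_Icc_self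
    have hvol : 0 < (volume q).toReal := ENNReal.toReal_pos hpos.ne' htop
    have hint : IntegrableOn f q := hf.mono_set hsub
    constructor
    · exact div_nonneg (setIntegral_nonneg hm fun t ht => (hf1 t (hsub ht)).1) hvol.le
    · rw [div_le_one hvol]
      calc ∫ t in q, f t ≤ ∫ _ in q, (1:ℝ) :=
            setIntegral_mono_on hint (integrableOn_const htop) hm
              fun t ht => (hf1 t (hsub ht)).2
        _ = (volume q).toReal := by simp; rfl
  unfold condExpPart
  by_cases hx : ∃ q ∈ Q, x ∈ q
  · obtain ⟨q, hq, hxq⟩ := hx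
    rw [Finset.sum_eq_single_of_mem q hq ?_]
    · rw [Set.indicator_of_mem hxq]; exact havg q hq
    · intro b hb hbq
      refine Set.indicator_of_notMem (fun hxb => ?_) _
      exact Set.disjoint_left.1
        (hQ.2.1 (Finset.mem_coe.2 hb) (Finset.mem_coe.2 hq) hbq) hxb hxq
  · push_neg at hx
    rw [Finset.sum_eq_zero fun q hq => Set.indicator_of_notMem (hx q hq) _]
    exact Set.mem_Icc.2 ⟨le_refl 0, zero_le_one⟩

lemma habs_bound (hQ : IsIntervalPartition Q) (hf : IntegrableOn f (Set.Icc (0:ℝ) 1))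
    (hf1 : ∀ x ∈ Set.Icc (0:ℝ) 1, f x ∈ Set.Icc (0:ℝ) 1) :
    ∀ x ∈ Set.Icc (0:ℝ) 1, |f x - condExpPart Q f x| ≤ 1 := by
  intro x hx
  have h1 := hf1 x hx
  have h2 := condExp_mem hQ hf hf1 x
  rw [Set.mem_Icc] at h1 h2
  rw [abs_le]
  constructor <;> linarith

lemma hdiff_int (hQ : IsIntervalPartition Q) (hf : IntegrableOn f (Set.Icc (0:ℝ) 1)) :
    IntegrableOn (fun x => f x - condExpPart Q f x) (Set.Icc (0:ℝ) 1) :=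
  hf.sub (condExp_integrable hQ).integrableOn

lemma integral_atom (hQ : IsIntervalPartition Q) (hf : IntegrableOn f (Set.Icc (0:ℝ) 1))
    {q : Set ℝ} (hq : q ∈ Q) :
    ∫ x in q, (f x - condExpPart Q f x) = 0 := by
  obtain ⟨hm, hpos, htop⟩ := atoms_meas hQ hq
  have hsub : q ⊆ Set.Icc 0 1 := (atoms_sub hQ hq).trans Set.Ioc_subset_Icc_self
  have hvol : (volume q).toReal ≠ 0 := (ENNReal.toReal_pos hpos.ne' htop).ne'
  have hintf : IntegrableOn f q := hf.mono_set hsub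
  have hintE : IntegrableOn (condExpPart Q f) q := (condExp_integrable hQ).integrableOn
  rw [integral_sub hintf hintE]
  have hE : ∫ x in q, condExpPart Q f x = ∫ x in q, f x := by
    unfold condExpPart
    rw [integral_finset_sum]
    · rw [Finset.sum_eq_single_of_mem q hq ?_]
      · rw [setIntegral_indicator hm, Set.inter_self, setIntegral_const, smul_eq_mul,
          Measure.real, mul_comm, div_mul_cancel₀ _ hvol]
      · intro s hs hsq
        obtain ⟨hms, _, _⟩ := atoms_meas hQ hs
        have hd : Disjoint q s :=
          hQ.2.1 (Finset.mem_coe.2 hq) (Finset.mem_coe.2 hs) (Ne.symm hsq)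
        rw [setIntegral_indicator hms, Set.disjoint_iff_inter_eq_empty.1 hd]
        simp
    · intro s hs
      obtain ⟨hms, _, hvs⟩ := atoms_meas hQ hs
      exact ((integrable_indicator_iff hms).2
        (integrableOn_const hvs)).integrableOn
  rw [hE, sub_self]

lemma key_bound (hQ : IsIntervalPartition Q) (hf : IntegrableOn f (Set.Icc (0:ℝ) 1))
    (hf1 : ∀ x ∈ Set.Icc (0:ℝ) 1, f x ∈ Set.Icc (0:ℝ) 1) {δ : ℝ} (hδ : 0 ≤ δ)
    (hlen : ∀ q ∈ Q, (volume q).toReal ≤ δ) {t : ℝ} (ht : t ∈ Set.Icc (0:ℝ) 1) :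
    |∫ x in Set.Ioc (0:ℝ) t, (f x - condExpPart Q f x)| ≤ δ := by
  set h : ℝ → ℝ := fun x => f x - condExpPart Q f x with hh
  have hint : IntegrableOn h (Set.Icc (0:ℝ) 1) := hdiff_int hQ hf
  have habs := habs_bound hQ hf hf1
  -- split the integral over atoms
  have hUnion : ⋃ q ∈ Q, (q ∩ Set.Ioc (0:ℝ) t) = Set.Ioc (0:ℝ) t := by
    have h1 : ⋃ q ∈ Q, q = Set.Ioc (0:ℝ) 1 := by
      rw [← Finset.set_biUnion_coe, ← Set.sUnion_eq_biUnion]; exact hQ.2.2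
    ext z
    simp only [Set.mem_iUnion, Set.mem_inter_iff, Set.mem_Ioc, exists_prop]
    constructor
    · rintro ⟨q, hq, _, hz⟩; exact hz
    · intro hz
      have hz1 : z ∈ Set.Ioc (0:ℝ) 1 := ⟨hz.1, hz.2.trans ht.2⟩
      rw [← h1] at hz1
      simp only [Set.mem_iUnion, exists_prop] at hz1
      obtain ⟨q, hq, hzq⟩ := hz1
      exact ⟨q, hq, hzq, hz⟩
  have hqsub : ∀ q ∈ Q, q ∩ Set.Ioc (0:ℝ) t ⊆ Set.Icc (0:ℝ) 1 := fun q hq =>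
    (Set.inter_subset_left).trans ((atoms_sub hQ hq).trans Set.Ioc_subset_Icc_self)
  have hsplit : ∫ x in Set.Ioc (0:ℝ) t, h x
      = ∑ q ∈ Q, ∫ x in q ∩ Set.Ioc (0:ℝ) t, h x := by
    have hdisj : (↑Q : Set (Set ℝ)).Pairwise (Function.onFun Disjoint fun q => q ∩ Set.Ioc (0:ℝ) t) := by
      intro q1 hq1 q2 hq2 hne
      exact Disjoint.mono Set.inter_subset_left Set.inter_subset_left
        (hQ.2.1 hq1 hq2 hne)
    have := integral_biUnion_finset (f := h) (μ := volume) Q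
      (s := fun q => q ∩ Set.Ioc (0:ℝ) t)
      (fun q hq => ((atoms_meas hQ hq).1).inter measurableSet_Ioc)
      hdisj (fun q hq => hint.mono_set (hqsub q hq))
    rw [hUnion] at this
    exact this
  -- each term is bounded by δ
  have hterm_bound : ∀ q ∈ Q, |∫ x in q ∩ Set.Ioc (0:ℝ) t, h x| ≤ δ := by
    intro q hq
    obtain ⟨hm, hpos, htop⟩ := atoms_meas hQ hq
    have hmq : volume (q ∩ Set.Ioc (0:ℝ) t) ≤ volume q := measure_mono Set.inter_subset_left
    have hfin : volume (q ∩ Set.Ioc (0:ℝ) t) < ⊤ := lt_of_le_of_lt hmq htop.lt_top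
    have := norm_setIntegral_le_of_norm_le_const (C := 1) hfin
      (fun x hx => by rw [Real.norm_eq_abs]; exact habs x (hqsub q hq hx))
    rw [Real.norm_eq_abs] at this
    refine this.trans ?_
    rw [one_mul]
    exact (ENNReal.toReal_mono htop hmq).trans (hlen q hq)
  -- terms for atoms not containing t vanish
  have hterm_zero : ∀ q ∈ Q, t ∉ q → ∫ x in q ∩ Set.Ioc (0:ℝ) t, h x = 0 := by
    intro q hq htq
    obtain ⟨c, d, hcd, hqe⟩ := hQ.1 q hq
    rw [hqe, Set.mem_Ioc, not_and_or, not_lt, not_le] at htq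
    rcases htq with htc | hdt
    · have : q ∩ Set.Ioc (0:ℝ) t = ∅ := by
        rw [hqe]
        ext z
        simp only [Set.mem_inter_iff, Set.mem_Ioc, Set.mem_empty_iff_false, iff_false]
        rintro ⟨⟨h1, _⟩, _, h4⟩
        linarith
      rw [this]; simp
    · have : q ∩ Set.Ioc (0:ℝ) t = q := by
        apply Set.inter_eq_left.2
        intro z hz
        have hz1 := atoms_sub hQ hq hz
        rw [hqe, Set.mem_Ioc] at hz
        exact ⟨hz1.1, hz.2.trans hdt.le⟩
      rw [this]
      exact integral_atom hQ hf hq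
  rw [hsplit]
  by_cases hx : ∃ q ∈ Q, t ∈ q
  · obtain ⟨q, hq, hxq⟩ := hx
    rw [Finset.sum_eq_single_of_mem q hq (fun b hb hbq => hterm_zero b hb
      (fun hxb => Set.disjoint_left.1
        (hQ.2.1 (Finset.mem_coe.2 hb) (Finset.mem_coe.2 hq) hbq) hxb hxq))]
    exact hterm_bound q hq
  · push_neg at hx
    rw [Finset.sum_eq_zero fun q hq => hterm_zero q hq (hx q hq)]
    simpa using hδ

lemma boxNorm_le (hQ : IsIntervalPartition Q) (hf : IntegrableOn f (Set.Icc (0:ℝ) 1))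
    (hf1 : ∀ x ∈ Set.Icc (0:ℝ) 1, f x ∈ Set.Icc (0:ℝ) 1) {δ : ℝ} (hδ : 0 ≤ δ)
    (hlen : ∀ q ∈ Q, (volume q).toReal ≤ δ) :
    boxNorm (fun x => f x - condExpPart Q f x) ≤ 2 * δ := by
  apply Real.sSup_le _ (by linarith)
  rintro y ⟨a, b, ha, hab, hb1, rfl⟩
  rw [intervalIntegral.integral_of_le hab]
  set h : ℝ → ℝ := fun x => f x - condExpPart Q f x with hh
  have hint : IntegrableOn h (Set.Icc (0:ℝ) 1) := hdiff_int hQ hf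
  have hsum : ∫ x in Set.Ioc (0:ℝ) b, h x
      = (∫ x in Set.Ioc (0:ℝ) a, h x) + ∫ x in Set.Ioc a b, h x := by
    have hint1 : IntegrableOn h (Set.Ioc 0 a) := hint.mono_set (by
      intro x hx
      rw [Set.mem_Ioc] at hx
      exact Set.mem_Icc.2 ⟨hx.1.le, hx.2.trans (hab.trans hb1)⟩)
    have hint2 : IntegrableOn h (Set.Ioc a b) := hint.mono_set (by
      intro x hx
      rw [Set.mem_Ioc] at hx
      exact Set.mem_Icc.2 ⟨(ha.trans hx.1.le), hx.2.trans hb1⟩)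
    rw [← setIntegral_union (Set.Ioc_disjoint_Ioc_of_le le_rfl) measurableSet_Ioc hint1 hint2]
    rw [Set.Ioc_union_Ioc_eq_Ioc ha hab]
  have hkb := key_bound hQ hf hf1 hδ hlen (t := b) ⟨ha.trans hab, hb1⟩
  have hka := key_bound hQ hf hf1 hδ hlen (t := a) ⟨ha, hab.trans hb1⟩
  have : ∫ x in Set.Ioc a b, h x
      = (∫ x in Set.Ioc (0:ℝ) b, h x) - ∫ x in Set.Ioc (0:ℝ) a, h x := by
    rw [hsum]; ring
  rw [this]
  calc |(∫ x in Set.Ioc (0:ℝ) b, h x) - ∫ x in Set.Ioc (0:ℝ) a, h x|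
      ≤ |∫ x in Set.Ioc (0:ℝ) b, h x| + |∫ x in Set.Ioc (0:ℝ) a, h x| := abs_sub _ _
    _ ≤ 2 * δ := by linarith

lemma boxNorm_le_one (hQ : IsIntervalPartition Q) (hf : IntegrableOn f (Set.Icc (0:ℝ) 1))
    (hf1 : ∀ x ∈ Set.Icc (0:ℝ) 1, f x ∈ Set.Icc (0:ℝ) 1) :
    boxNorm (fun x => f x - condExpPart Q f x) ≤ 1 := by
  apply Real.sSup_le _ zero_le_one
  rintro y ⟨a, b, ha, hab, hb1, rfl⟩
  rw [intervalIntegral.integral_of_le hab]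
  set h : ℝ → ℝ := fun x => f x - condExpPart Q f x with hh
  have hint : IntegrableOn h (Set.Icc (0:ℝ) 1) := hdiff_int hQ hf
  have hsub : Set.Ioc a b ⊆ Set.Icc (0:ℝ) 1 :=
    (Set.Ioc_subset_Icc_self).trans (Set.Icc_subset_Icc ha hb1)
  have hfin : volume (Set.Ioc a b) < ⊤ := by rw [Real.volume_Ioc]; exact ENNReal.ofReal_lt_top
  have := norm_setIntegral_le_of_norm_le_const (C := 1) hfin
    (fun x hx => by rw [Real.norm_eq_abs]; exact habs_bound hQ hf hf1 x (hsub hx))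
  rw [Real.norm_eq_abs, one_mul] at this
  refine this.trans ?_
  rw [Measure.real, Real.volume_Ioc, ENNReal.toReal_ofReal (by linarith)]
  linarith

end Aux

section Pieces

/-- Equal subdivision of `Ioc a b` into `n` half-open pieces. -/
noncomputable def pieces (a b : ℝ) (n : ℕ) : Finset (Set ℝ) := by
  classical
  exact (Finset.range n).image fun i : ℕ =>
    Set.Ioc (a + (i : ℝ) * ((b - a) / n)) (a + ((i : ℝ) + 1) * ((b - a) / n))

lemma pieces_card (a b : ℝ) (n : ℕ) : (pieces a b n).card ≤ n := by
  classical
  simpa [pieces] using (Finset.card_image_le.trans (le_of_eq (Finset.card_range n)))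

lemma pieces_mem {a b : ℝ} {n : ℕ} (hab : a < b) (hn : 0 < n) {q : Set ℝ}
    (hq : q ∈ pieces a b n) :
    ∃ c d : ℝ, c < d ∧ d - c ≤ (b - a) / n ∧ q = Set.Ioc c d ∧ q ⊆ Set.Ioc a b := by
  classical
  simp only [pieces, Finset.mem_image, Finset.mem_range] at hq
  obtain ⟨i, hi, rfl⟩ := hq
  have hn' : (0:ℝ) < n := by exact_mod_cast hn
  have hs : 0 < (b - a) / n := div_pos (by linarith) hn'
  refine ⟨_, _, by nlinarith, by ring_nf; nlinarith, rfl, ?_⟩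
  have h1 : a ≤ a + (i : ℝ) * ((b - a) / n) := by
    have : (0:ℝ) ≤ (i : ℝ) * ((b - a) / n) := by positivity
    linarith
  have h2 : a + ((i : ℝ) + 1) * ((b - a) / n) ≤ b := by
    have hi' : (i : ℝ) + 1 ≤ n := by exact_mod_cast Nat.succ_le_of_lt hi
    have : ((i : ℝ) + 1) * ((b - a) / n) ≤ (n : ℝ) * ((b - a) / n) :=
      mul_le_mul_of_nonneg_right hi' hs.le
    have hcancel : (n : ℝ) * ((b - a) / n) = b - a := by
      field_simp
    linarith
  exact Set.Ioc_subset_Ioc h1 h2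

lemma pieces_disjoint {a b : ℝ} {n : ℕ} (hab : a ≤ b) :
    (↑(pieces a b n) : Set (Set ℝ)).PairwiseDisjoint id := by
  classical
  intro q1 hq1 q2 hq2 hne
  simp only [pieces, Finset.coe_image, Set.mem_image, Finset.mem_coe, Finset.mem_range] at hq1 hq2
  obtain ⟨i, hi, rfl⟩ := hq1
  obtain ⟨j, hj, rfl⟩ := hq2
  have hij : i ≠ j := by rintro rfl; exact hne rfl
  have hs : 0 ≤ (b - a) / n := div_nonneg (by linarith) (Nat.cast_nonneg n)
  have key : ∀ i j : ℕ, i < j →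
      Disjoint (Set.Ioc (a + (i : ℝ) * ((b - a) / n)) (a + ((i : ℝ) + 1) * ((b - a) / n)))
        (Set.Ioc (a + (j : ℝ) * ((b - a) / n)) (a + ((j : ℝ) + 1) * ((b - a) / n))) := by
    intro i j hlt
    rw [Set.disjoint_left]
    rintro z ⟨_, hz2⟩ ⟨hz3, _⟩
    have hij' : (i : ℝ) + 1 ≤ j := by exact_mod_cast Nat.succ_le_of_lt hlt
    have : ((i:ℝ) + 1) * ((b - a) / n) ≤ (j : ℝ) * ((b - a) / n) :=
      mul_le_mul_of_nonneg_right hij' hs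
    linarith
  rcases hij.lt_or_gt with h | h
  · exact key i j h
  · exact (key j i h).symm

lemma telescope (x : ℕ → ℝ) (hx : ∀ i, x i ≤ x (i + 1)) (n : ℕ) :
    ⋃ i ∈ Finset.range n, Set.Ioc (x i) (x (i + 1)) = Set.Ioc (x 0) (x n) := by
  induction n with
  | zero => simp
  | succ n ih =>
    rw [Finset.range_add_one, Finset.set_biUnion_insert, ih, Set.union_comm,
      Set.Ioc_union_Ioc_eq_Ioc (monotone_nat_of_le_succ hx (Nat.zero_le n)) (hx n)]

lemma pieces_sUnion {a b : ℝ} {n : ℕ} (hab : a ≤ b) (hn : 0 < n) :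
    ⋃₀ (↑(pieces a b n) : Set (Set ℝ)) = Set.Ioc a b := by
  classical
  have hs : 0 ≤ (b - a) / n := div_nonneg (by linarith) (Nat.cast_nonneg n)
  set x : ℕ → ℝ := fun i => a + (i : ℝ) * ((b - a) / n) with hx
  have hmono : ∀ i, x i ≤ x (i + 1) := by
    intro i
    simp only [hx]
    push_cast
    nlinarith
  have h1 : ⋃₀ (↑(pieces a b n) : Set (Set ℝ)) = ⋃ i ∈ Finset.range n, Set.Ioc (x i) (x (i + 1)) := by
    rw [Set.sUnion_eq_biUnion]
    ext z
    simp only [pieces, Finset.coe_image, Set.mem_iUnion, Set.mem_image, Finset.mem_coe,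
      Finset.mem_range, exists_prop, hx]
    constructor
    · rintro ⟨q, ⟨i, hi, rfl⟩, hz⟩
      refine ⟨i, hi, ?_⟩
      push_cast
      convert hz using 2
    · rintro ⟨i, hi, hz⟩
      refine ⟨_, ⟨i, hi, rfl⟩, ?_⟩
      push_cast at hz ⊢
      convert hz using 2
  rw [h1, telescope x hmono n]
  have hx0 : x 0 = a := by simp [hx]
  have hxn : x n = b := by
    simp only [hx]
    have hn' : (n:ℝ) ≠ 0 := by exact_mod_cast hn.ne'
    field_simp
    ring
  rw [hx0, hxn]

end Pieces

/-- Weak regularity lemma for `[0,1]`-valued functions. -/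
theorem stmt16 (ε : ℝ) (hε : 0 < ε) (P : Finset (Set ℝ)) (hP : IsIntervalPartition P)
    (f : ℝ → ℝ) (hf : IntegrableOn f (Set.Icc (0:ℝ) 1))
    (hf1 : ∀ x ∈ Set.Icc (0:ℝ) 1, f x ∈ Set.Icc (0:ℝ) 1) :
    ∃ Q : Finset (Set ℝ), IsIntervalPartition Q ∧ Refines Q P ∧
      (Q.card : ℝ) ≤ (P.card : ℝ) + 2 * ε⁻¹ ^ 2 ∧
      boxNorm (fun x => f x - condExpPart Q f x) ≤ ε := by
  classical
  by_cases hε1 : ε ≤ 1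
  · -- main case: subdivide
    set δ : ℝ := ε / 2 with hδdef
    have hδpos : 0 < δ := by positivity
    set m : Set ℝ → ℕ := fun s => ⌈(sSup s - sInf s) / δ⌉₊ with hm
    set Q : Finset (Set ℝ) := P.biUnion (fun s => pieces (sInf s) (sSup s) (m s)) with hQdef
    -- facts about atoms of P
    have hfacts : ∀ s ∈ P, ∃ a b : ℝ, a < b ∧ s = Set.Ioc a b ∧ sInf s = a ∧ sSup s = b := by
      intro s hs
      obtain ⟨a, b, hab, rfl⟩ := hP.1 s hs
      exact ⟨a, b, hab, rfl, csInf_Ioc hab, csSup_Ioc hab⟩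
    have hmpos : ∀ s ∈ P, 0 < m s := by
      intro s hs
      obtain ⟨a, b, hab, hse, hinf, hsup⟩ := hfacts s hs
      rw [hm]
      simp only
      rw [hinf, hsup, Nat.lt_iff_add_one_le, zero_add, Nat.one_le_ceil_iff]
      exact div_pos (by linarith) hδpos
    have hstep : ∀ s ∈ P, (sSup s - sInf s) / (m s) ≤ δ := by
      intro s hs
      obtain ⟨a, b, hab, hse, hinf, hsup⟩ := hfacts s hs
      have hm0 : (0:ℝ) < m s := by exact_mod_cast hmpos s hs
      rw [div_le_iff₀ hm0]
      have hle := Nat.le_ceil ((sSup s - sInf s) / δ)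
      have : sSup s - sInf s ≤ δ * ⌈(sSup s - sInf s) / δ⌉₊ := by
        rw [← div_le_iff₀' hδpos]
        exact hle
      exact this
    -- basic membership fact
    have hQmem : ∀ q ∈ Q, ∃ s ∈ P, ∃ c d : ℝ, c < d ∧ d - c ≤ δ ∧ q = Set.Ioc c d ∧ q ⊆ s := by
      intro q hq
      rw [hQdef, Finset.mem_biUnion] at hq
      obtain ⟨s, hs, hqp⟩ := hq
      obtain ⟨a, b, hab, hse, hinf, hsup⟩ := hfacts s hs
      have hab' : sInf s < sSup s := by rw [hinf, hsup]; exact hab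
      obtain ⟨c, d, hcd, hlen, hqe, hqsub⟩ := pieces_mem hab' (hmpos s hs) hqp
      refine ⟨s, hs, c, d, hcd, hlen.trans (hstep s hs), hqe, ?_⟩
      rw [hse, ← hinf, ← hsup]
      exact hqsub
    -- Q is an interval partition
    have hQpart : IsIntervalPartition Q := by
      refine ⟨?_, ?_, ?_⟩
      · intro q hq
        obtain ⟨s, hs, c, d, hcd, _, hqe, _⟩ := hQmem q hq
        exact ⟨c, d, hcd, hqe⟩
      · intro q1 hq1 q2 hq2 hne
        rw [Finset.mem_coe, hQdef, Finset.mem_biUnion] at hq1 hq2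
        obtain ⟨s1, hs1, hq1p⟩ := hq1
        obtain ⟨s2, hs2, hq2p⟩ := hq2
        by_cases hss : s1 = s2
        · subst hss
          obtain ⟨a, b, hab, hse, hinf, hsup⟩ := hfacts s1 hs1
          have hab' : sInf s1 ≤ sSup s1 := by rw [hinf, hsup]; exact hab.le
          exact pieces_disjoint hab' (Finset.mem_coe.2 hq1p) (Finset.mem_coe.2 hq2p) hne
        · obtain ⟨a1, b1, hab1, hse1, hinf1, hsup1⟩ := hfacts s1 hs1
          obtain ⟨a2, b2, hab2, hse2, hinf2, hsup2⟩ := hfacts s2 hs2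
          have h1 : q1 ⊆ s1 := by
            obtain ⟨c, d, _, _, _, hsub⟩ := pieces_mem (by rw [hinf1, hsup1]; exact hab1)
              (hmpos s1 hs1) hq1p
            rw [hse1, ← hinf1, ← hsup1]; exact hsub
          have h2 : q2 ⊆ s2 := by
            obtain ⟨c, d, _, _, _, hsub⟩ := pieces_mem (by rw [hinf2, hsup2]; exact hab2)
              (hmpos s2 hs2) hq2p
            rw [hse2, ← hinf2, ← hsup2]; exact hsub
          exact Disjoint.mono h1 h2
            (hP.2.1 (Finset.mem_coe.2 hs1) (Finset.mem_coe.2 hs2) hss)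
      · rw [← hP.2.2]
        ext z
        simp only [Set.mem_sUnion, Finset.mem_coe]
        constructor
        · rintro ⟨q, hq, hzq⟩
          obtain ⟨s, hs, c, d, _, _, _, hqsub⟩ := hQmem q hq
          exact ⟨s, hs, hqsub hzq⟩
        · rintro ⟨s, hs, hzs⟩
          obtain ⟨a, b, hab, hse, hinf, hsup⟩ := hfacts s hs
          have hsu : ⋃₀ (↑(pieces (sInf s) (sSup s) (m s)) : Set (Set ℝ)) = s := by
            rw [pieces_sUnion (by rw [hinf, hsup]; exact hab.le) (hmpos s hs), hinf, hsup, ← hse]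
          rw [← hsu] at hzs
          obtain ⟨q, hq, hzq⟩ := hzs
          exact ⟨q, Finset.mem_biUnion.2 ⟨s, hs, hq⟩, hzq⟩
    -- refinement
    have hQref : Refines Q P := by
      intro q hq
      obtain ⟨s, hs, c, d, _, _, _, hqsub⟩ := hQmem q hq
      exact ⟨s, hs, hqsub⟩
    -- cardinality bound
    have hsum1 : ∑ s ∈ P, (sSup s - sInf s) = 1 := by
      have hts : ∀ s ∈ P, sSup s - sInf s = (volume s).toReal := by
        intro s hs
        obtain ⟨a, b, hab, hse, hinf, hsup⟩ := hfacts s hs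
        rw [hinf, hsup, hse, Real.volume_Ioc, ENNReal.toReal_ofReal (by linarith)]
      rw [Finset.sum_congr rfl hts]
      have hmeas : ∀ s ∈ P, MeasurableSet s := fun s hs => (atoms_meas hP hs).1
      have hvol : volume (⋃ s ∈ P, s) = ∑ s ∈ P, volume s :=
        measure_biUnion_finset hP.2.1 hmeas
      have hU : ⋃ s ∈ P, s = Set.Ioc (0:ℝ) 1 := by
        rw [← Finset.set_biUnion_coe, ← Set.sUnion_eq_biUnion]; exact hP.2.2
      rw [← ENNReal.toReal_sum (fun s hs => (atoms_meas hP hs).2.2), ← hvol, hU,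
        Real.volume_Ioc]
      norm_num
    have hcard : (Q.card : ℝ) ≤ (P.card : ℝ) + 2 * ε⁻¹ ^ 2 := by
      have h1 : Q.card ≤ ∑ s ∈ P, (pieces (sInf s) (sSup s) (m s)).card :=
        Finset.card_biUnion_le
      have h2 : ∑ s ∈ P, (pieces (sInf s) (sSup s) (m s)).card ≤ ∑ s ∈ P, m s :=
        Finset.sum_le_sum fun s _ => pieces_card _ _ _
      have h3 : (Q.card : ℝ) ≤ ∑ s ∈ P, (m s : ℝ) := by
        exact_mod_cast (h1.trans h2)
      have h4 : ∀ s ∈ P, (m s : ℝ) ≤ (sSup s - sInf s) / δ + 1 := by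
        intro s hs
        obtain ⟨a, b, hab, hse, hinf, hsup⟩ := hfacts s hs
        have hnn : 0 ≤ (sSup s - sInf s) / δ := by
          rw [hinf, hsup]
          exact div_nonneg (by linarith) hδpos.le
        exact (Nat.ceil_lt_add_one hnn).le
      have h5 : (Q.card : ℝ) ≤ ∑ s ∈ P, ((sSup s - sInf s) / δ + 1) :=
        h3.trans (Finset.sum_le_sum h4)
      rw [Finset.sum_add_distrib, ← Finset.sum_div, hsum1] at h5
      simp only [Finset.sum_const, nsmul_eq_mul, mul_one] at h5
      have hinv : 1 ≤ ε⁻¹ := (one_le_inv₀ hε).2 hε1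
      have h6 : 1 / δ ≤ 2 * ε⁻¹ ^ 2 := by
        rw [hδdef]
        rw [div_le_iff₀ hδpos] at *
        have : ε * ε⁻¹ = 1 := mul_inv_cancel₀ hε.ne'
        nlinarith [sq_nonneg ε⁻¹]
      linarith
    -- atom length bound
    have hlen : ∀ q ∈ Q, (volume q).toReal ≤ δ := by
      intro q hq
      obtain ⟨s, hs, c, d, hcd, hdc, hqe, _⟩ := hQmem q hq
      rw [hqe, Real.volume_Ioc, ENNReal.toReal_ofReal (by linarith)]
      exact hdc
    refine ⟨Q, hQpart, hQref, hcard, ?_⟩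
    have := boxNorm_le hQpart hf hf1 hδpos.le hlen
    rw [hδdef] at this
    linarith
  · -- easy case ε > 1 : take Q = P
    push_neg at hε1
    refine ⟨P, hP, fun q hq => ⟨q, hq, subset_rfl⟩, ?_, ?_⟩
    · have : 0 ≤ 2 * ε⁻¹ ^ 2 := by positivity
      linarith
    · exact (boxNorm_le_one hP hf hf1).trans hε1.le
end

section
/- Energy increment: let f : [0,1] → [0,1] be integrable, 𝒫 a finite interval partition of [0,1], and I ⊆ [0,1] an interval with |∫_I (f − 𝔼(f|𝒫))| > ε. If 𝒬 is the common refinement of 𝒫 with {I, I^c}, then ℰ_f(𝒬) ≥ ℰ_f(𝒫) + ε², where ℰ_f(𝒫) = ∫₀¹ (𝔼(f|𝒫))² dx. -/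
open MeasureTheory

/-- The energy `ℰ_f(𝒫) = ∫₀¹ (𝔼(f|𝒫))²`. -/
noncomputable def energy (P : Finset (Set ℝ)) (f : ℝ → ℝ) : ℝ :=
  ∫ x in Set.Ioc (0:ℝ) 1, (condExpPart P f x) ^ 2

/-! ### Auxiliary lemmas -/

lemma measPart_of_interval {P : Finset (Set ℝ)} (hP : IsIntervalPartition P) :
    IsMeasPartition P := by
  obtain ⟨h1, h2, h3⟩ := hP
  refine ⟨fun s hs => ?_, h2, h3⟩
  obtain ⟨a, b, hab, rfl⟩ := h1 s hs
  refine ⟨measurableSet_Ioc, ?_⟩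
  rw [Real.volume_Ioc]
  simpa using hab

lemma atom_subset {Q : Finset (Set ℝ)} (hQ : IsMeasPartition Q) {q : Set ℝ} (hq : q ∈ Q) :
    q ⊆ Set.Ioc (0:ℝ) 1 := by
  rw [← hQ.2.2]
  exact Set.subset_sUnion_of_mem (Finset.mem_coe.mpr hq)

lemma atom_ne_top {Q : Finset (Set ℝ)} (hQ : IsMeasPartition Q) {q : Set ℝ} (hq : q ∈ Q) :
    volume q ≠ ⊤ :=
  ((measure_mono (atom_subset hQ hq)).trans_lt (by simp)).ne

lemma atom_toReal_pos {Q : Finset (Set ℝ)} (hQ : IsMeasPartition Q) {q : Set ℝ} (hq : q ∈ Q) :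
    0 < (volume q).toReal :=
  ENNReal.toReal_pos (hQ.1 q hq).2.ne' (atom_ne_top hQ hq)

lemma condExpPart_measurable {Q : Finset (Set ℝ)} (hQ : IsMeasPartition Q) (f : ℝ → ℝ) :
    Measurable (condExpPart Q f) :=
  Finset.measurable_sum _ fun s hs => (measurable_const.indicator (hQ.1 s hs).1)

lemma condExpPart_abs_le (Q : Finset (Set ℝ)) (f : ℝ → ℝ) (x : ℝ) :
    |condExpPart Q f x| ≤ ∑ s ∈ Q, |(∫ t in s, f t) / (volume s).toReal| := by
  refine (Finset.abs_sum_le_sum_abs _ _).trans ?_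
  refine Finset.sum_le_sum fun s hs => ?_
  by_cases h : x ∈ s <;> simp [Set.indicator_apply, h, abs_nonneg]

lemma integrableOn_of_bdd {g : ℝ → ℝ} (hg : Measurable g) {C : ℝ} (hC : ∀ x, |g x| ≤ C)
    {A : Set ℝ} (hfin : volume A ≠ ⊤) : IntegrableOn g A := by
  have hconst : IntegrableOn (fun _ => C) A := integrableOn_const hfin
  exact Integrable.mono' hconst hg.aestronglyMeasurable (ae_of_all _ fun x => by simpa using hC x)

lemma condExpPart_integrableOn {Q : Finset (Set ℝ)} (hQ : IsMeasPartition Q) (f : ℝ → ℝ)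
    {A : Set ℝ} (hfin : volume A ≠ ⊤) : IntegrableOn (condExpPart Q f) A :=
  integrableOn_of_bdd (condExpPart_measurable hQ f) (condExpPart_abs_le Q f) hfin

/-- If `A` is a union of atoms of `Q`, then `∫_A 𝔼(f|Q) = ∫_A f`. -/
lemma setIntegral_condExpPart {Q : Finset (Set ℝ)} (hQ : IsMeasPartition Q)
    {f : ℝ → ℝ} (hf : IntegrableOn f (Set.Ioc (0:ℝ) 1))
    {A : Set ℝ} (hA : MeasurableSet A) (hAsub : A ⊆ Set.Ioc (0:ℝ) 1)
    (hsplit : ∀ q ∈ Q, q ⊆ A ∨ Disjoint q A) :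
    ∫ x in A, condExpPart Q f x = ∫ x in A, f x := by
  have hfinA : volume A ≠ ⊤ := ((measure_mono hAsub).trans_lt (by simp)).ne
  have hstep1 : ∫ x in A, condExpPart Q f x
      = ∑ q ∈ Q, ∫ x in A, Set.indicator q
          (fun _ => (∫ t in q, f t) / (volume q).toReal) x := by
    unfold condExpPart
    refine integral_finset_sum _ fun q hq => ?_
    exact (integrableOn_const hfinA).indicator (hQ.1 q hq).1
  have hstep2 : ∀ q ∈ Q, (∫ x in A, Set.indicator q
      (fun _ => (∫ t in q, f t) / (volume q).toReal) x) = ∫ x in A ∩ q, f x := by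
    intro q hq
    rw [setIntegral_indicator (hQ.1 q hq).1]
    rcases hsplit q hq with hsub | hdisj
    · rw [Set.inter_eq_self_of_subset_right hsub, setIntegral_const, smul_eq_mul,
        measureReal_def, mul_div_cancel₀]
      exact (atom_toReal_pos hQ hq).ne'
    · have : A ∩ q = ∅ := Set.disjoint_iff_inter_eq_empty.mp hdisj.symm
      simp [this]
  have hstep3 : ∑ q ∈ Q, (∫ x in A ∩ q, f x) = ∫ x in A, f x := by
    have hmeas : ∀ q ∈ Q, MeasurableSet (A ∩ q) := fun q hq => hA.inter (hQ.1 q hq).1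
    have hdisj : (Q : Set (Set ℝ)).Pairwise (Function.onFun Disjoint fun q => A ∩ q) := by
      intro a ha b hb hab
      exact (hQ.2.1 ha hb hab).mono Set.inter_subset_right Set.inter_subset_right
    have hint : ∀ q ∈ Q, IntegrableOn f (A ∩ q) := fun q hq =>
      hf.mono_set (Set.inter_subset_left.trans hAsub)
    have hunion : (⋃ q ∈ Q, (A ∩ q)) = A := by
      rw [← Set.inter_iUnion₂]
      have h1 : (⋃ q ∈ (Q : Finset (Set ℝ)), q) = Set.Ioc (0:ℝ) 1 := by
        rw [← hQ.2.2, Set.sUnion_eq_biUnion, Finset.set_biUnion_coe]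
      rw [h1, Set.inter_eq_left.mpr hAsub]
    rw [← integral_biUnion_finset Q hmeas hdisj hint, hunion]
  rw [hstep1, Finset.sum_congr rfl hstep2, hstep3]

lemma integral_condExpPart_mul {P : Finset (Set ℝ)} (hP : IsMeasPartition P)
    (f g : ℝ → ℝ) (hg : IntegrableOn g (Set.Ioc (0:ℝ) 1)) :
    ∫ x in Set.Ioc (0:ℝ) 1, condExpPart P f x * g x
      = ∑ p ∈ P, ((∫ t in p, f t) / (volume p).toReal) * ∫ x in p, g x := by
  have hpt : ∀ x, condExpPart P f x * g x
      = ∑ p ∈ P, Set.indicator p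
          (fun y => ((∫ t in p, f t) / (volume p).toReal) * g y) x := by
    intro x
    unfold condExpPart
    rw [Finset.sum_mul]
    refine Finset.sum_congr rfl fun p hp => ?_
    by_cases h : x ∈ p <;> simp [Set.indicator_apply, h]
  simp only [hpt]
  rw [integral_finset_sum _ fun p hp =>
    (hg.const_mul _).indicator (hP.1 p hp).1]
  refine Finset.sum_congr rfl fun p hp => ?_
  rw [setIntegral_indicator (hP.1 p hp).1,
    Set.inter_eq_self_of_subset_right (atom_subset hP hp), integral_const_mul]

/-- Cauchy–Schwarz for set integrals, proved via the variance trick. -/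
lemma sq_setIntegral_le {A : Set ℝ} (hfin : volume A ≠ ⊤) {g : ℝ → ℝ}
    (hg : IntegrableOn g A) (hg2 : IntegrableOn (fun x => g x ^ 2) A) :
    (∫ x in A, g x) ^ 2 ≤ (volume A).toReal * ∫ x in A, g x ^ 2 := by
  set m := (volume A).toReal with hm
  set J := ∫ x in A, g x with hJ
  set K := ∫ x in A, g x ^ 2 with hK
  rcases eq_or_lt_of_le (ENNReal.toReal_nonneg : (0:ℝ) ≤ m) with h0 | hpos
  · have hA0 : volume A = 0 := by
      rcases (ENNReal.toReal_eq_zero_iff _).mp h0.symm with h | h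
      · exact h
      · exact absurd h hfin
    have hJ0 : J = 0 := by
      rw [hJ, Measure.restrict_eq_zero.mpr hA0, integral_zero_measure]
    have hm0 : m = 0 := h0.symm
    rw [hJ0, hm0]
    simp
  · have key : 0 ≤ ∫ x in A, (g x * m - J) ^ 2 :=
      integral_nonneg fun x => sq_nonneg _
    have hexp : ∫ x in A, (g x * m - J) ^ 2
        = m ^ 2 * K - 2 * (m * J) * J + J ^ 2 * m := by
      have hptw : ∀ x, (g x * m - J) ^ 2
          = m ^ 2 * g x ^ 2 - (2 * (m * J)) * g x + J ^ 2 := fun x => by ring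
      simp only [hptw]
      have i1 : IntegrableOn (fun x => m ^ 2 * g x ^ 2 - 2 * (m * J) * g x) A :=
        (hg2.const_mul _).sub (hg.const_mul _)
      have i2 : IntegrableOn (fun _ : ℝ => J ^ 2) A :=
        integrableOn_const hfin
      rw [integral_add i1 i2, integral_sub (hg2.const_mul _) (hg.const_mul _),
        integral_const_mul, integral_const_mul, setIntegral_const, smul_eq_mul,
          measureReal_def]
      ring
    rw [hexp] at key
    have : m * J ^ 2 ≤ m ^ 2 * K := by nlinarith
    have h2 : m * J ^ 2 ≤ m * (m * K) := by nlinarith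
    exact le_of_mul_le_mul_left (by nlinarith) hpos

/-- Energy increment: refining by an interval witnessing `‖f - 𝔼(f|𝒫)‖_□ > ε`
increases the energy by at least `ε²`. -/
theorem stmt17 (f : ℝ → ℝ) (hf : IntegrableOn f (Set.Ioc (0:ℝ) 1))
    (hf1 : ∀ x ∈ Set.Ioc (0:ℝ) 1, f x ∈ Set.Icc (0:ℝ) 1)
    (P : Finset (Set ℝ)) (hP : IsIntervalPartition P)
    (I : Set ℝ) (hI : ∃ a b : ℝ, I = Set.Ioc a b) (hIsub : I ⊆ Set.Ioc (0:ℝ) 1)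
    (ε : ℝ) (hε : 0 < ε)
    (hbig : ε < |∫ x in I, (f x - condExpPart P f x)|)
    (Q : Finset (Set ℝ)) (hQ : IsMeasPartition Q) (hQP : Refines Q P)
    (hQI : ∀ q ∈ Q, q ⊆ I ∨ q ⊆ Iᶜ) :
    energy P f + ε ^ 2 ≤ energy Q f := by
  have hPm : IsMeasPartition P := measPart_of_interval hP
  set eP : ℝ → ℝ := condExpPart P f with heP
  set eQ : ℝ → ℝ := condExpPart Q f with heQ
  have hIocfin : volume (Set.Ioc (0:ℝ) 1) ≠ ⊤ := by simp
  have hIm : MeasurableSet I := by obtain ⟨a, b, rfl⟩ := hI; exact measurableSet_Ioc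
  have hIfin : volume I ≠ ⊤ := ((measure_mono hIsub).trans_lt (by simp)).ne
  -- integrability
  have hePint : IntegrableOn eP (Set.Ioc 0 1) := condExpPart_integrableOn hPm f hIocfin
  have heQint : IntegrableOn eQ (Set.Ioc 0 1) := condExpPart_integrableOn hQ f hIocfin
  set CP := ∑ s ∈ P, |(∫ t in s, f t) / (volume s).toReal| with hCP
  set CQ := ∑ s ∈ Q, |(∫ t in s, f t) / (volume s).toReal| with hCQ
  have hePb : ∀ x, |eP x| ≤ CP := condExpPart_abs_le P f
  have heQb : ∀ x, |eQ x| ≤ CQ := condExpPart_abs_le Q f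
  have hePm : Measurable eP := condExpPart_measurable hPm f
  have heQm : Measurable eQ := condExpPart_measurable hQ f
  set g : ℝ → ℝ := fun x => eQ x - eP x with hgdef
  have hgm : Measurable g := heQm.sub hePm
  have hgb : ∀ x, |g x| ≤ CQ + CP := fun x =>
    (abs_sub (eQ x) (eP x)).trans (add_le_add (heQb x) (hePb x))
  have hg2b : ∀ x, |g x ^ 2| ≤ (CQ + CP) ^ 2 := fun x => by
    rw [abs_pow]
    exact pow_le_pow_left₀ (abs_nonneg _) (hgb x) 2
  have hgint : IntegrableOn g (Set.Ioc (0:ℝ) 1) :=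
    integrableOn_of_bdd hgm hgb hIocfin
  have hg2int : IntegrableOn (fun x => g x ^ 2) (Set.Ioc (0:ℝ) 1) :=
    integrableOn_of_bdd (hgm.pow_const 2) hg2b hIocfin
  have heQ2int : IntegrableOn (fun x => eQ x ^ 2) (Set.Ioc (0:ℝ) 1) :=
    integrableOn_of_bdd (heQm.pow_const 2)
      (fun x => by rw [abs_pow]; exact pow_le_pow_left₀ (abs_nonneg _) (heQb x) 2) hIocfin
  have heP2int : IntegrableOn (fun x => eP x ^ 2) (Set.Ioc (0:ℝ) 1) :=
    integrableOn_of_bdd (hePm.pow_const 2)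
      (fun x => by rw [abs_pow]; exact pow_le_pow_left₀ (abs_nonneg _) (hePb x) 2) hIocfin
  have hPQint : IntegrableOn (fun x => eP x * eQ x) (Set.Ioc (0:ℝ) 1) :=
    integrableOn_of_bdd (hePm.mul heQm)
      (fun x => by
        rw [Pi.mul_apply, abs_mul]
        exact mul_le_mul (hePb x) (heQb x) (abs_nonneg _)
          ((abs_nonneg _).trans (hePb x))) hIocfin
  -- splitting conditions
  have hsplitQ : ∀ p ∈ P, ∀ q ∈ Q, q ⊆ p ∨ Disjoint q p := by
    intro p hp q hq
    obtain ⟨p', hp', hsub⟩ := hQP q hq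
    by_cases hpp : p' = p
    · exact Or.inl (hpp ▸ hsub)
    · exact Or.inr ((hPm.2.1 (Finset.mem_coe.mpr hp') (Finset.mem_coe.mpr hp)
        hpp).mono_left hsub)
  have hsplitP : ∀ p ∈ P, ∀ p' ∈ P, p' ⊆ p ∨ Disjoint p' p := by
    intro p hp p' hp'
    by_cases hpp : p' = p
    · exact Or.inl (hpp ▸ subset_rfl)
    · exact Or.inr (hPm.2.1 (Finset.mem_coe.mpr hp') (Finset.mem_coe.mpr hp) hpp)
  -- Pythagoras: ∫ eP·eQ = ∫ eP·eP
  have hPyth : (∫ x in Set.Ioc (0:ℝ) 1, eP x * eQ x)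
      = ∫ x in Set.Ioc (0:ℝ) 1, eP x * eP x := by
    rw [heP, integral_condExpPart_mul hPm f eQ heQint,
      integral_condExpPart_mul hPm f eP hePint]
    refine Finset.sum_congr rfl fun p hp => ?_
    congr 1
    rw [heQ, setIntegral_condExpPart hQ hf (hPm.1 p hp).1 (atom_subset hPm hp)
      (hsplitQ p hp),
      setIntegral_condExpPart hPm hf (hPm.1 p hp).1 (atom_subset hPm hp)
      (hsplitP p hp)]
  have hePsq : (∫ x in Set.Ioc (0:ℝ) 1, eP x * eP x) = energy P f := by
    unfold energy
    refine integral_congr_ae (ae_of_all _ fun x => ?_)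
    simp [pow_two, heP]
  -- ∫ g² over [0,1] equals the energy difference
  have hgsq : ∫ x in Set.Ioc (0:ℝ) 1, g x ^ 2 = energy Q f - energy P f := by
    have hptw : ∀ x, g x ^ 2 = eQ x ^ 2 - 2 * (eP x * eQ x) + eP x ^ 2 := fun x => by
      simp only [hgdef]; ring
    simp only [hptw]
    have i3 : IntegrableOn (fun x => 2 * (eP x * eQ x)) (Set.Ioc (0:ℝ) 1) :=
      hPQint.const_mul 2
    have i1 : IntegrableOn (fun x => eQ x ^ 2 - 2 * (eP x * eQ x)) (Set.Ioc (0:ℝ) 1) :=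
      heQ2int.sub i3
    rw [integral_add i1 heP2int, integral_sub heQ2int i3, integral_const_mul, hPyth, hePsq]
    have hEQ : (∫ x in Set.Ioc (0:ℝ) 1, eQ x ^ 2) = energy Q f := rfl
    have hEP : (∫ x in Set.Ioc (0:ℝ) 1, eP x ^ 2) = energy P f := rfl
    rw [hEQ, hEP]
    ring
  -- ∫_I g = ∫_I (f - eP)
  have hIintQ : (∫ x in I, eQ x) = ∫ x in I, f x := by
    rw [heQ]
    refine setIntegral_condExpPart hQ hf hIm hIsub fun q hq => ?_
    rcases hQI q hq with h | h
    · exact Or.inl h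
    · exact Or.inr (Set.disjoint_left.mpr fun a ha => h ha)
  have hIg : (∫ x in I, g x) = ∫ x in I, (f x - eP x) := by
    simp only [hgdef]
    rw [integral_sub (heQint.mono_set hIsub) (hePint.mono_set hIsub),
      integral_sub (hf.mono_set hIsub) (hePint.mono_set hIsub), hIintQ]
  -- Cauchy–Schwarz and conclusion
  have hCS : (∫ x in I, g x) ^ 2 ≤ (volume I).toReal * ∫ x in I, g x ^ 2 :=
    sq_setIntegral_le hIfin (hgint.mono_set hIsub) (hg2int.mono_set hIsub)
  have hvol : (volume I).toReal ≤ 1 := by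
    refine ENNReal.toReal_le_of_le_ofReal one_pos.le ?_
    refine (measure_mono hIsub).trans ?_
    simp [Real.volume_Ioc]
  have hInn : (0:ℝ) ≤ ∫ x in I, g x ^ 2 := integral_nonneg fun x => sq_nonneg _
  have hI1 : (∫ x in I, g x) ^ 2 ≤ ∫ x in I, g x ^ 2 :=
    hCS.trans (mul_le_of_le_one_left hInn hvol)
  have hI2 : (∫ x in I, g x ^ 2) ≤ ∫ x in Set.Ioc (0:ℝ) 1, g x ^ 2 :=
    setIntegral_mono_set hg2int (ae_of_all _ fun x => sq_nonneg _)
      (HasSubset.Subset.eventuallyLE hIsub)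
  have hbig2 : ε ^ 2 < (∫ x in I, g x) ^ 2 := by
    rw [hIg, ← sq_abs (∫ x in I, (f x - eP x))]
    exact pow_lt_pow_left₀ hbig hε.le (by norm_num)
  have := hgsq ▸ (hI1.trans hI2)
  linarith
end
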